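/- arXiv:1601.07348 — 3 statements merged into one kernel-verified Lean document; each statement's English description precedes it below -/
import Mathlib

section
/- Let q > 2 and let P be a monic irreducible polynomial in F_q[θ] of degree d. Then BG_{q^d − 2} ≡ Σ_{i=0}^{d−1} 1/l_i (mod P), i.e., P divides l_{d−1}·BG_{q^d−2} − l_{d−1}·Σ_{i=0}^{d−1} l_i^{−1} (both sides made integral by multiplying by l_{d−1}). -/
set_option autoImplicit false

open Polynomial Finset

section HG
variable {K : Type} [CommRing K]

/-- `Hg q s k r` = complete homogeneous symmetric polynomial `h_r` evaluated at
`s^(q^0), s^(q^1), ..., s^(q^k)`. -/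
def Hg (q : ℕ) (s : K) : ℕ → ℕ → K
  | 0, r => s ^ r
  | k+1, r => ∑ j ∈ Finset.range (r+1), s ^ (q^(k+1) * j) * Hg q s k (r - j)

lemma Hg_zero (q : ℕ) (s : K) (r : ℕ) : Hg q s 0 r = s ^ r := rfl

lemma Hg_succ (q : ℕ) (s : K) (k r : ℕ) :
    Hg q s (k+1) r = ∑ j ∈ Finset.range (r+1), s ^ (q^(k+1) * j) * Hg q s k (r - j) := rfl

lemma Hg_r_zero (q : ℕ) (s : K) (k : ℕ) : Hg q s k 0 = 1 := by
  induction k with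
  | zero => simp [Hg_zero]
  | succ k ih => simp [Hg_succ, ih]

/-- top Pascal rule -/
lemma Hg_pascal (q : ℕ) (s : K) (k r : ℕ) :
    Hg q s (k+1) (r+1) = Hg q s k (r+1) + s ^ (q^(k+1)) * Hg q s (k+1) r := by
  rw [Hg_succ q s k (r+1), Finset.sum_range_succ' _ (r+1), Hg_succ q s k r, Finset.mul_sum]
  simp only [mul_zero, pow_zero, one_mul, Nat.sub_zero]
  rw [add_comm]
  congr 1
  refine Finset.sum_congr rfl fun j hj => ?_
  have h1 : r + 1 - (j + 1) = r - j := by omega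
  have h2 : q ^ (k+1) * (j+1) = q^(k+1) + q^(k+1) * j := by ring
  rw [h1, h2, pow_add]
  ring

lemma sum_pow_of_frob {q : ℕ} (hq0 : q ≠ 0) (hF : ∀ x y : K, (x+y)^q = x^q + y^q)
    {ι : Type} (s : Finset ι) (f : ι → K) :
    (∑ i ∈ s, f i) ^ q = ∑ i ∈ s, f i ^ q := by
  classical
  induction s using Finset.induction_on with
  | empty => simp [zero_pow hq0]
  | insert a s' hnot ih => rw [Finset.sum_insert hnot, Finset.sum_insert hnot, hF, ih]

/-- Frobenius shift: raising to the `q`-th power shifts the variables. -/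
lemma Hg_pow {q : ℕ} (hq0 : q ≠ 0) (hF : ∀ x y : K, (x+y)^q = x^q + y^q) (s : K) (k r : ℕ) :
    (Hg q s k r) ^ q = Hg q (s^q) k r := by
  induction k generalizing r with
  | zero => simp only [Hg_zero]; rw [← pow_mul, ← pow_mul, mul_comm]
  | succ k ih =>
    rw [Hg_succ, Hg_succ, sum_pow_of_frob hq0 hF]
    refine Finset.sum_congr rfl fun j hj => ?_
    rw [mul_pow, ih, ← pow_mul, ← pow_mul]
    have : q ^ (k+1) * j * q = q * (q ^ (k+1) * j) := by ring
    rw [this]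

/-- bottom Pascal rule -/
lemma Hg_bottom (q : ℕ) (s : K) (k r : ℕ) :
    Hg q s (k+1) (r+1) = Hg q (s^q) k (r+1) + s * Hg q s (k+1) r := by
  induction k generalizing r with
  | zero =>
    rw [Hg_succ, Finset.sum_range_succ, Hg_succ, Finset.mul_sum]
    have h1 : ∀ j ∈ Finset.range (r+1), s ^ (q^(0+1) * j) * Hg q s 0 (r + 1 - j)
        = s * (s ^ (q^(0+1) * j) * Hg q s 0 (r - j)) := by
      intro j hj
      rw [Finset.mem_range] at hj
      have h2 : r + 1 - j = (r - j) + 1 := by omega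
      rw [Hg_zero, Hg_zero, h2, pow_succ]; ring
    rw [Finset.sum_congr rfl h1, Nat.sub_self, Hg_r_zero, mul_one, add_comm]
    congr 1
    rw [Hg_zero, ← pow_mul]
    congr 1
    ring
  | succ k ih =>
    rw [Hg_succ q s (k+1) (r+1), Hg_succ q (s^q) k (r+1)]
    have hmain : ∀ j ∈ Finset.range (r+2),
        s ^ (q^(k+2) * j) * Hg q s (k+1) (r + 1 - j)
          = (s^q) ^ (q^(k+1) * j) * Hg q (s^q) k (r + 1 - j)
            + (if j ≤ r then s * (s ^ (q^(k+2) * j) * Hg q s (k+1) (r - j)) else 0) := by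
      intro j hj
      rw [Finset.mem_range] at hj
      have hzz : (s^q) ^ (q^(k+1) * j) = s ^ (q^(k+2) * j) := by
        rw [← pow_mul]
        congr 1
        ring
      by_cases hjr : j ≤ r
      · have h2 : r + 1 - j = (r - j) + 1 := by omega
        rw [if_pos hjr, h2, ih (r - j), hzz]
        ring
      · have hj1 : j = r + 1 := by omega
        subst hj1
        rw [if_neg hjr, Nat.sub_self, Hg_r_zero, Hg_r_zero, hzz]
        ring
    rw [Finset.sum_congr rfl hmain, Finset.sum_add_distrib]
    congr 1
    rw [Finset.sum_range_succ]
    rw [if_neg (by omega : ¬ (r+1 ≤ r)), add_zero]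
    rw [Hg_succ q s (k+1) r, Finset.mul_sum]
    refine Finset.sum_congr rfl fun j hj => ?_
    rw [Finset.mem_range] at hj
    rw [if_pos (by omega : j ≤ r)]

/-- the key symmetric-function identity -/
lemma Hg_symm {q : ℕ} (hq0 : q ≠ 0) (hF : ∀ x y : K, (x+y)^q = x^q + y^q) (s : K) (k r : ℕ) :
    (Hg q s k (r+1))^q - Hg q s k (r+1) = (s ^ (q^(k+1)) - s) * Hg q s (k+1) r := by
  have h1 := Hg_pascal q s k r
  have h2 := Hg_bottom q s k r
  rw [Hg_pow hq0 hF]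
  linear_combination h1 - h2

end HG

section EE

set_option linter.unusedSectionVars false

/-- image in `K` of the "lower part" polynomial with coefficients `c`. -/
def vE {Fq : Type} [Field Fq] {K : Type} [Field K] [Algebra Fq K] (t : K) {k : ℕ}
    (c : Fin k → Fq) : K :=
  ∑ i, algebraMap Fq K (c i) * t ^ (i : ℕ)

/-- `eE t k x = ∏_{v ∈ V_k} (x + v)` where `V_k` is spanned by `1, t, ..., t^(k-1)`. -/
def eE (Fq : Type) [Field Fq] [Fintype Fq] {K : Type} [Field K] [Algebra Fq K]
    (t : K) (k : ℕ) (x : K) : K :=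
  ∏ c : Fin k → Fq, (x + vE t c)

variable {Fq : Type} [Field Fq] [Fintype Fq] {K : Type} [Field K] [Algebra Fq K]

lemma vE_zero (t : K) (c : Fin 0 → Fq) : vE t c = 0 := by simp [vE]

lemma vE_snoc (t : K) {k : ℕ} (c : Fin k → Fq) (b : Fq) :
    vE t (Fin.snoc c b) = vE t c + algebraMap Fq K b * t ^ k := by
  unfold vE
  rw [Fin.sum_univ_castSucc]
  simp [Fin.snoc_castSucc, Fin.snoc_last]

lemma eE_zero (t : K) (x : K) : eE Fq t 0 x = x := by
  simp [eE, vE_zero]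

lemma eE_succ (t : K) (k : ℕ) (x : K) :
    eE Fq t (k+1) x = ∏ b : Fq, eE Fq t k ((x + algebraMap Fq K b * t ^ k)) := by
  unfold eE
  rw [← Equiv.prod_comp (Fin.snocEquiv (fun _ => Fq)) (fun c => x + vE t c)]
  rw [Fintype.prod_prod_type]
  refine Finset.prod_congr rfl fun b _ => Finset.prod_congr rfl fun c _ => ?_
  have hsn : ((Fin.snocEquiv fun _ => Fq) (b, c)) = Fin.snoc c b := rfl
  rw [hsn, vE_snoc]
  ring

/-- `∏_{a ∈ Fq} (X - C a) = X^q - X`. -/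
lemma prod_X_sub_C_eq : (∏ a : Fq, (X - C a)) = X ^ (Fintype.card Fq) - X := by
  have hmonic : (X ^ (Fintype.card Fq) - X : Fq[X]).Monic := by
    apply monic_X_pow_sub
    calc (X : Fq[X]).degree ≤ 1 := degree_X_le
    _ < (Fintype.card Fq : WithBot ℕ) := by
        exact_mod_cast Nat.one_lt_cast.mpr Fintype.one_lt_card
  have hdeg := FiniteField.X_pow_card_sub_X_natDegree_eq Fq (Fintype.one_lt_card (α := Fq))
  have hroots := FiniteField.roots_X_pow_card_sub_X Fq
  have hcard : Multiset.card (X ^ (Fintype.card Fq) - X : Fq[X]).roots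
      = (X ^ (Fintype.card Fq) - X : Fq[X]).natDegree := by
    rw [hroots, hdeg]; rfl
  have h2 := prod_multiset_X_sub_C_of_monic_of_roots_card_eq hmonic hcard
  rw [hroots] at h2
  rw [← h2, Finset.prod_eq_multiset_prod]

variable (q : ℕ)

lemma prod_w_add (hq : Fintype.card Fq = q) (w : K) :
    ∏ b : Fq, (w + algebraMap Fq K b) = w ^ q - w := by
  subst hq
  have h1 : ∏ b : Fq, (w - algebraMap Fq K b) = w ^ (Fintype.card Fq) - w := by
    have h0 := congrArg (aeval w) (prod_X_sub_C_eq (Fq := Fq))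
    rw [map_prod] at h0
    simpa using h0
  rw [← h1, ← Equiv.prod_comp (Equiv.neg Fq) (fun b => w - algebraMap Fq K b)]
  refine Finset.prod_congr rfl fun b _ => ?_
  simp [sub_neg_eq_add]

lemma prod_linear (hq : Fintype.card Fq = q) (y z : K) :
    ∏ b : Fq, (y + algebraMap Fq K b * z) = y ^ q - z ^ (q-1) * y := by
  have hq1 : 1 < q := hq ▸ Fintype.one_lt_card
  obtain ⟨q', rfl⟩ : ∃ q', q = q' + 1 := ⟨q - 1, by omega⟩
  simp only [Nat.add_sub_cancel]
  by_cases hz : z = 0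
  · subst hz
    simp only [mul_zero, add_zero]
    rw [Finset.prod_const, Finset.card_univ, hq, zero_pow (by omega : q' ≠ 0), zero_mul, sub_zero]
  · have key : ∀ b : Fq, y + algebraMap Fq K b * z = z * (y/z + algebraMap Fq K b) := by
      intro b; field_simp
    rw [Finset.prod_congr rfl (fun b _ => key b), Finset.prod_mul_distrib, Finset.prod_const,
      Finset.card_univ, hq, prod_w_add (q'+1) hq]
    rw [mul_sub, div_pow, mul_div_cancel₀ _ (pow_ne_zero _ hz), pow_succ z, mul_assoc, mul_div_cancel₀ _ hz]

variable (Fq) in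
/-- additivity and `Fq`-homogeneity of `eE`, plus the Frobenius recursion. -/
lemma eE_linear (hq : Fintype.card Fq = q) (hF : ∀ x y : K, (x+y)^q = x^q + y^q)
    (hB : ∀ b : Fq, (algebraMap Fq K b)^q = algebraMap Fq K b) (t : K) : ∀ k : ℕ,
    (∀ x y : K, eE Fq t k (x + y) = eE Fq t k x + eE Fq t k y) ∧
    (∀ (b : Fq) (x : K), eE Fq t k (algebraMap Fq K b * x) = algebraMap Fq K b * eE Fq t k x) := by
  intro k
  induction k with
  | zero => constructor <;> intros <;> simp [eE_zero]
  | succ k ih =>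
    have hrec : ∀ x : K, eE Fq t (k+1) x
        = (eE Fq t k x)^q - (eE Fq t k (t^k))^(q-1) * eE Fq t k x := by
      intro x
      rw [eE_succ]
      have h1 : ∀ b : Fq, eE Fq t k (x + algebraMap Fq K b * t^k)
          = eE Fq t k x + algebraMap Fq K b * eE Fq t k (t^k) := by
        intro b
        rw [ih.1, ih.2]
      rw [Finset.prod_congr rfl (fun b _ => h1 b), prod_linear q hq]
    constructor
    · intro x y
      rw [hrec, hrec, hrec, ih.1, hF]
      ring
    · intro b x
      rw [hrec, hrec, ih.2, mul_pow, hB]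
      ring

variable (Fq) in
lemma eE_rec (hq : Fintype.card Fq = q) (hF : ∀ x y : K, (x+y)^q = x^q + y^q)
    (hB : ∀ b : Fq, (algebraMap Fq K b)^q = algebraMap Fq K b) (t : K) (k : ℕ) (x : K) :
    eE Fq t (k+1) x = (eE Fq t k x)^q - (eE Fq t k (t^k))^(q-1) * eE Fq t k x := by
  rw [eE_succ]
  have h1 : ∀ b : Fq, eE Fq t k (x + algebraMap Fq K b * t^k)
      = eE Fq t k x + algebraMap Fq K b * eE Fq t k (t^k) := by
    intro b
    rw [(eE_linear Fq q hq hF hB t k).1, (eE_linear Fq q hq hF hB t k).2]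
  rw [Finset.prod_congr rfl (fun b _ => h1 b), prod_linear q hq]

variable (Fq) in
/-- evaluation of `eE` at powers of `t`, in terms of complete homogeneous sums. -/
lemma eE_tpow (hq : Fintype.card Fq = q) (hF : ∀ x y : K, (x+y)^q = x^q + y^q)
    (hB : ∀ b : Fq, (algebraMap Fq K b)^q = algebraMap Fq K b) (t : K) :
    ∀ k m : ℕ, k ≤ m → eE Fq t k (t^m) = Hg q t k (m-k) * eE Fq t k (t^k) := by
  have hq1 : 1 < q := hq ▸ Fintype.one_lt_card
  intro k
  induction k with
  | zero => intro m hm; simp [eE_zero, Hg_zero]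
  | succ k ih =>
    have key : ∀ m : ℕ, k+1 ≤ m → eE Fq t (k+1) (t^m)
        = (eE Fq t k (t^k))^q * ((t^(q^(k+1)) - t) * Hg q t (k+1) (m-(k+1))) := by
      intro m hm
      rw [eE_rec Fq q hq hF hB, ih m (by omega)]
      set c := eE Fq t k (t^k) with hc
      rw [mul_pow, Hg_pow (by omega : q ≠ 0) hF]
      have h2 : c^(q-1) * (Hg q t k (m-k) * c) = Hg q t k (m-k) * c^q := by
        rw [← pow_sub_one_mul (by omega : q ≠ 0) c]
        ring
      rw [h2]
      have h3 : m - k = (m - (k+1)) + 1 := by omega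
      rw [h3]
      have h4 := Hg_symm (by omega : q ≠ 0) hF t k (m - (k+1))
      calc Hg q (t^q) k (m-(k+1)+1) * c^q - Hg q t k (m-(k+1)+1) * c^q
          = (Hg q (t^q) k (m-(k+1)+1) - Hg q t k (m-(k+1)+1)) * c^q := by ring
        _ = ((t^(q^(k+1)) - t) * Hg q t (k+1) (m-(k+1))) * c^q := by
            rw [← Hg_pow (by omega : q ≠ 0) hF, h4]
        _ = c^q * ((t^(q^(k+1)) - t) * Hg q t (k+1) (m-(k+1))) := by ring
    intro m hm
    rw [key m hm, key (k+1) le_rfl, Nat.sub_self, Hg_r_zero]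
    ring

variable (Fq) in
/-- the crucial recursion `e_{k+1}(t^{k+1}) = (t^{q^{k+1}} - t) · e_k(t^k)^q`. -/
lemma eE_F (hq : Fintype.card Fq = q) (hF : ∀ x y : K, (x+y)^q = x^q + y^q)
    (hB : ∀ b : Fq, (algebraMap Fq K b)^q = algebraMap Fq K b) (t : K) (k : ℕ) :
    eE Fq t (k+1) (t^(k+1)) = (t^(q^(k+1)) - t) * (eE Fq t k (t^k))^q := by
  have hq1 : 1 < q := hq ▸ Fintype.one_lt_card
  rw [eE_rec Fq q hq hF hB, eE_tpow Fq q hq hF hB t k (k+1) (by omega)]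
  set c := eE Fq t k (t^k) with hc
  rw [mul_pow, Hg_pow (by omega : q ≠ 0) hF]
  have h2 : c^(q-1) * (Hg q t k (k+1-k) * c) = Hg q t k (k+1-k) * c^q := by
    rw [← pow_sub_one_mul (by omega : q ≠ 0) c]
    ring
  rw [h2]
  have h3 : k+1-k = 0+1 := by omega
  rw [h3]
  have h4 := Hg_symm (by omega : q ≠ 0) hF t k 0
  calc Hg q (t^q) k (0+1) * c^q - Hg q t k (0+1) * c^q
      = (Hg q (t^q) k (0+1) - Hg q t k (0+1)) * c^q := by ring
    _ = ((t^(q^(k+1)) - t) * Hg q t (k+1) 0) * c^q := by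
        rw [← Hg_pow (by omega : q ≠ 0) hF, h4]
    _ = (t^(q^(k+1)) - t) * c^q := by rw [Hg_r_zero]; ring

/-- sum of inverses over a coset of `V_k`. -/
def sE (Fq : Type) [Field Fq] [Fintype Fq] {K : Type} [Field K] [Algebra Fq K]
    (t : K) (k : ℕ) (x : K) : K :=
  ∑ c : Fin k → Fq, (x + vE t c)⁻¹

/-- the constant `D_k` (the "derivative" of the additive polynomial `e_k`). -/
def DE (Fq : Type) [Field Fq] [Fintype Fq] {K : Type} [Field K] [Algebra Fq K]
    (q : ℕ) (t : K) (k : ℕ) : K :=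
  (-1)^k * ∏ j ∈ Finset.range k, (eE Fq t j (t^j))^(q-1)

lemma DE_zero (t : K) : DE Fq q t 0 = 1 := by simp [DE]

lemma DE_succ (t : K) (k : ℕ) :
    DE Fq q t (k+1) = -((eE Fq t k (t^k))^(q-1)) * DE Fq q t k := by
  unfold DE
  rw [Finset.prod_range_succ, pow_succ]
  ring

lemma sE_succ (t : K) (k : ℕ) (x : K) :
    sE Fq t (k+1) x = ∑ b : Fq, sE Fq t k ((x + algebraMap Fq K b * t ^ k)) := by
  unfold sE
  rw [← Equiv.sum_comp (Fin.snocEquiv (fun _ => Fq)) (fun c => (x + vE t c)⁻¹)]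
  rw [Fintype.sum_prod_type]
  refine Finset.sum_congr rfl fun b _ => Finset.sum_congr rfl fun c _ => ?_
  have hsn : ((Fin.snocEquiv fun _ => Fq) (b, c)) = Fin.snoc c b := rfl
  rw [hsn, vE_snoc]
  ring_nf

variable (Fq) in
/-- sum of inverses over all of `Fq`. -/
lemma sum_inv_one (hq : Fintype.card Fq = q) (w : K) (h : ∀ b : Fq, w + algebraMap Fq K b ≠ 0) :
    ∑ b : Fq, (w + algebraMap Fq K b)⁻¹ = -(w^q - w)⁻¹ := by
  classical
  have hW : ∏ b : Fq, (w + algebraMap Fq K b) = w ^ q - w := prod_w_add q hq w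
  -- numerator: sum of products over erased sets equals -1
  have hnum : ∑ b : Fq, ∏ b' ∈ Finset.univ.erase b, (w + algebraMap Fq K b') = -1 := by
    have hder : derivative (∏ a : Fq, (X + C a)) = -1 := by
      have : (∏ a : Fq, (X + C a)) = X ^ (Fintype.card Fq) - X := by
        rw [← prod_X_sub_C_eq (Fq := Fq),
          ← Equiv.prod_comp (Equiv.neg Fq) (fun b => (X : Fq[X]) - C b)]
        refine Finset.prod_congr rfl fun b _ => ?_
        simp [sub_neg_eq_add]
      rw [this, derivative_sub, derivative_X_pow, derivative_X]
      simp [FiniteField.cast_card_eq_zero]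
    -- expand the derivative of the product
    rw [Finset.prod_eq_multiset_prod, derivative_prod] at hder
    have hsum : (Multiset.map (fun b =>
        (Multiset.map (fun a => X + C a) (Finset.univ.val.erase b)).prod
          * derivative (X + C b)) Finset.univ.val).sum
        = ∑ b : Fq, ∏ b' ∈ Finset.univ.erase b, (X + C b') := by
      rw [Finset.sum_eq_multiset_sum]
      congr 1
      refine Multiset.map_congr rfl fun b _ => ?_
      rw [derivative_add, derivative_X, derivative_C, add_zero, mul_one,
        Finset.prod_eq_multiset_prod, Finset.erase_val]
    rw [hsum] at hder
    have h5 := congrArg (aeval w) hder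
    rw [map_sum] at h5
    simp only [map_prod, map_add, aeval_X, aeval_C] at h5
    simpa using h5
  have key : ∀ b : Fq, (w + algebraMap Fq K b)⁻¹
      = (∏ b' ∈ Finset.univ.erase b, (w + algebraMap Fq K b')) * (w^q - w)⁻¹ := by
    intro b
    have hfac : w^q - w = (w + algebraMap Fq K b)
        * ∏ b' ∈ Finset.univ.erase b, (w + algebraMap Fq K b') := by
      rw [← hW, ← Finset.mul_prod_erase Finset.univ (fun b' => w + algebraMap Fq K b') (Finset.mem_univ b)]
    have hprod_ne : (∏ b' ∈ Finset.univ.erase b, (w + algebraMap Fq K b')) ≠ 0 :=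
      Finset.prod_ne_zero_iff.mpr fun b' _ => h b'
    rw [hfac, mul_inv, ← mul_assoc, mul_comm _ (w + algebraMap Fq K b)⁻¹, mul_assoc,
      mul_inv_cancel₀ hprod_ne, mul_one]
  rw [Finset.sum_congr rfl (fun b _ => key b), ← Finset.sum_mul, hnum, neg_one_mul]

variable (Fq) in
lemma sum_inv_lin (hq : Fintype.card Fq = q) (y z : K)
    (h : ∀ b : Fq, y + algebraMap Fq K b * z ≠ 0) :
    ∑ b : Fq, (y + algebraMap Fq K b * z)⁻¹ = -(z^(q-1)) * (y^q - z^(q-1)*y)⁻¹ := by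
  have hq1 : 1 < q := hq ▸ Fintype.one_lt_card
  have hcast : ((q : ℕ) : K) = 0 := by
    have h1 : ((Fintype.card Fq : ℕ) : Fq) = 0 := FiniteField.cast_card_eq_zero Fq
    have h2 := congrArg (algebraMap Fq K) h1
    rw [map_natCast, map_zero] at h2
    rw [← hq, h2]
  obtain ⟨q', rfl⟩ : ∃ q', q = q' + 1 := ⟨q - 1, by omega⟩
  simp only [Nat.add_sub_cancel] at hcast ⊢
  by_cases hz : z = 0
  · subst hz
    simp only [mul_zero, add_zero]
    rw [Finset.sum_const, Finset.card_univ, hq, zero_pow (by omega : q' ≠ 0), neg_zero,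
      zero_mul, nsmul_eq_mul, hcast, zero_mul]
  · have key : ∀ b : Fq, (y + algebraMap Fq K b * z)⁻¹
        = z⁻¹ * (y/z + algebraMap Fq K b)⁻¹ := by
      intro b
      rw [← mul_inv]
      congr 1
      field_simp
    have hne : ∀ b : Fq, y/z + algebraMap Fq K b ≠ 0 := by
      intro b hb
      apply h b
      have h8 : y + algebraMap Fq K b * z = z * (y/z + algebraMap Fq K b) := by field_simp
      rw [h8, hb, mul_zero]
    rw [Finset.sum_congr rfl (fun b _ => key b), ← Finset.mul_sum,
      sum_inv_one Fq (q'+1) hq (y/z) hne]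
    have hWne : (y/z)^(q'+1) - y/z ≠ 0 := by
      rw [← prod_w_add (q'+1) hq (y/z)]
      exact Finset.prod_ne_zero_iff.mpr fun b _ => hne b
    have hWne2 : y^(q'+1) - z^q' * y ≠ 0 := by
      have hfac : y^(q'+1) - z^q'*y = z^(q'+1) * ((y/z)^(q'+1) - y/z) := by
        rw [mul_sub, div_pow, mul_div_cancel₀ _ (pow_ne_zero _ hz), pow_succ z, mul_assoc, mul_div_cancel₀ _ hz]
      rw [hfac]
      exact mul_ne_zero (pow_ne_zero _ hz) hWne
    have hfac : y^(q'+1) - z^q'*y = z^(q'+1) * ((y/z)^(q'+1) - y/z) := by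
      rw [mul_sub, div_pow, mul_div_cancel₀ _ (pow_ne_zero _ hz), pow_succ z, mul_assoc, mul_div_cancel₀ _ hz]
    have hzz : z^q' * (z^(q'+1))⁻¹ = z⁻¹ := by
      rw [pow_succ, mul_inv, ← mul_assoc, mul_inv_cancel₀ (pow_ne_zero _ hz), one_mul]
    rw [hfac, mul_inv, ← mul_assoc, ← hzz]
    ring

variable (Fq) in
lemma sE_mul (hq : Fintype.card Fq = q) (hF : ∀ x y : K, (x+y)^q = x^q + y^q)
    (hB : ∀ b : Fq, (algebraMap Fq K b)^q = algebraMap Fq K b) (t : K) :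
    ∀ k (x : K), eE Fq t k x ≠ 0 → sE Fq t k x * eE Fq t k x = DE Fq q t k := by
  intro k
  induction k with
  | zero =>
    intro x hx
    rw [eE_zero] at hx ⊢
    rw [DE_zero]
    unfold sE
    rw [Fintype.sum_unique]
    rw [vE_zero, add_zero]
    exact inv_mul_cancel₀ hx
  | succ k ih =>
    intro x hx
    have hfacne : ∀ b : Fq, eE Fq t k (x + algebraMap Fq K b * t^k) ≠ 0 := by
      intro b hb
      apply hx
      rw [eE_succ]
      exact Finset.prod_eq_zero (Finset.mem_univ b) hb
    have hlin := eE_linear Fq q hq hF hB t k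
    have hyne : ∀ b : Fq, eE Fq t k x + algebraMap Fq K b * eE Fq t k (t^k) ≠ 0 := by
      intro b
      rw [← hlin.2 b (t^k), ← hlin.1]
      exact hfacne b
    have step1 : sE Fq t (k+1) x
        = ∑ b : Fq, DE Fq q t k * (eE Fq t k x + algebraMap Fq K b * eE Fq t k (t^k))⁻¹ := by
      rw [sE_succ]
      refine Finset.sum_congr rfl fun b _ => ?_
      have h6 := ih (x + algebraMap Fq K b * t^k) (hfacne b)
      have h7 : sE Fq t k (x + algebraMap Fq K b * t^k)
          = DE Fq q t k * (eE Fq t k (x + algebraMap Fq K b * t^k))⁻¹ := by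
        rw [eq_comm, mul_comm]
        rw [inv_mul_eq_iff_eq_mul₀ (hfacne b)]
        rw [← h6]
        ring
      rw [h7, hlin.1, hlin.2]
    rw [step1, ← Finset.mul_sum, sum_inv_lin Fq q hq _ _ hyne]
    have hrec := eE_rec Fq q hq hF hB t k x
    rw [DE_succ, ← hrec]
    rw [mul_assoc, mul_assoc, inv_mul_cancel₀ hx, mul_one]
    ring

variable (Fq) in
/-- relation between `eE`, `DE` and the Carlitz `l`-factorials. -/
lemma eE_L (hq : Fintype.card Fq = q) (hF : ∀ x y : K, (x+y)^q = x^q + y^q)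
    (hB : ∀ b : Fq, (algebraMap Fq K b)^q = algebraMap Fq K b) (t : K) :
    ∀ k, (∏ j ∈ Finset.range k, (t - t^(q^(j+1)))) * DE Fq q t k = eE Fq t k (t^k) := by
  have hq1 : 1 < q := hq ▸ Fintype.one_lt_card
  intro k
  induction k with
  | zero => rw [DE_zero, pow_zero, eE_zero]; simp
  | succ k ih =>
    rw [Finset.prod_range_succ, DE_succ, eE_F Fq q hq hF hB]
    calc (∏ j ∈ Finset.range k, (t - t^(q^(j+1)))) * (t - t^(q^(k+1)))
          * (-((eE Fq t k (t^k))^(q-1)) * DE Fq q t k)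
        = (t^(q^(k+1)) - t) * (eE Fq t k (t^k))^(q-1)
          * ((∏ j ∈ Finset.range k, (t - t^(q^(j+1)))) * DE Fq q t k) := by ring
      _ = (t^(q^(k+1)) - t) * ((eE Fq t k (t^k))^(q-1) * eE Fq t k (t^k)) := by rw [ih]; ring
      _ = (t^(q^(k+1)) - t) * (eE Fq t k (t^k))^q := by
          rw [pow_sub_one_mul (by omega : q ≠ 0)]

end EE

section AP
variable {Fq : Type} [Field Fq] [Fintype Fq]

/-- the "lower part" polynomial with coefficients `c`. -/
noncomputable def lowPoly {k : ℕ} (c : Fin k → Fq) : Fq[X] := ∑ i, C (c i) * X^(i:ℕ)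

/-- the monic polynomial of degree `k` with lower coefficients `c`. -/
noncomputable def ap (k : ℕ) (c : Fin k → Fq) : Fq[X] := X^k + lowPoly c

lemma lowPoly_coeff {k : ℕ} (c : Fin k → Fq) (j : Fin k) :
    (lowPoly c).coeff (j : ℕ) = c j := by
  classical
  unfold lowPoly
  rw [finset_sum_coeff]
  have h1 : ∀ i : Fin k, (C (c i) * X^(i:ℕ)).coeff (j:ℕ) = if i = j then c i else 0 := by
    intro i
    rw [coeff_C_mul_X_pow]
    by_cases h : i = j
    · subst h; simp
    · rw [if_neg h, if_neg (fun hc => h (Fin.ext hc.symm))]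
  rw [Finset.sum_congr rfl (fun i _ => h1 i), Finset.sum_ite_eq' Finset.univ j c,
    if_pos (Finset.mem_univ j)]

lemma lowPoly_degree_lt {k : ℕ} (c : Fin k → Fq) : (lowPoly c).degree < (k : WithBot ℕ) := by
  unfold lowPoly
  apply lt_of_le_of_lt (degree_sum_le _ _)
  rw [Finset.sup_lt_iff (by exact_mod_cast WithBot.bot_lt_coe k)]
  intro i _
  apply lt_of_le_of_lt (degree_C_mul_X_pow_le _ _)
  exact_mod_cast Nat.cast_lt.mpr i.isLt

lemma ap_monic (k : ℕ) (c : Fin k → Fq) : (ap k c).Monic :=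
  monic_X_pow_add (lowPoly_degree_lt c)

lemma ap_natDegree (k : ℕ) (c : Fin k → Fq) : (ap k c).natDegree = k := by
  have h1 : (ap k c).degree = k := by
    unfold ap
    rw [degree_add_eq_left_of_degree_lt, degree_X_pow]
    rw [degree_X_pow]
    exact lowPoly_degree_lt c
  exact natDegree_eq_of_degree_eq_some h1

lemma ap_inj (k : ℕ) : Function.Injective (ap k (Fq := Fq)) := by
  intro c c' h
  funext j
  have h1 := congrArg (fun p => Polynomial.coeff p (j:ℕ)) h
  simp only [ap, coeff_add] at h1
  rw [lowPoly_coeff, lowPoly_coeff] at h1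
  exact add_left_cancel h1

lemma monic_set_eq (k : ℕ) :
    {a : Fq[X] | a.Monic ∧ a.natDegree = k}
      = ↑((Finset.univ : Finset (Fin k → Fq)).map ⟨ap k, ap_inj k⟩) := by
  classical
  ext a
  simp only [Set.mem_setOf_eq, Finset.coe_map, Finset.coe_univ, Set.image_univ,
    Set.mem_range, Function.Embedding.coeFn_mk]
  constructor
  · rintro ⟨hm, hdeg⟩
    refine ⟨fun i => a.coeff (i : ℕ), ?_⟩
    ext n
    rcases lt_trichotomy n k with hn | hn | hn
    · rw [ap, coeff_add, coeff_X_pow, if_neg (by omega : n ≠ k), zero_add]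
      exact (lowPoly_coeff (fun i => a.coeff (i : ℕ)) ⟨n, hn⟩)
    · subst hn
      rw [ap, coeff_add, coeff_X_pow, if_pos rfl]
      rw [coeff_eq_zero_of_degree_lt (lowPoly_degree_lt _), add_zero]
      rw [← hdeg]
      exact (hm.coeff_natDegree).symm
    · rw [ap, coeff_add, coeff_X_pow, if_neg (by omega : n ≠ k), zero_add,
        coeff_eq_zero_of_degree_lt
          (lt_of_lt_of_le (lowPoly_degree_lt _) (by exact_mod_cast Nat.cast_le.mpr hn.le)),
        coeff_eq_zero_of_natDegree_lt (hdeg ▸ hn)]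
  · rintro ⟨c, rfl⟩
    exact ⟨ap_monic k c, ap_natDegree k c⟩

lemma monic_finsum_eq (k e : ℕ) :
    (∑ᶠ a ∈ {a : Fq[X] | a.Monic ∧ a.natDegree = k}, a ^ e)
      = ∑ c : Fin k → Fq, (ap k c) ^ e := by
  classical
  rw [monic_set_eq k, finsum_mem_coe_finset, Finset.sum_map]
  rfl

end AP

set_option maxHeartbeats 1000000

/-- For `q > 2` and `P` monic irreducible of degree `d` in `F_q[θ]`,
`BG_{q^d−2} ≡ ∑_{i=0}^{d−1} 1/l_i (mod P)`: `P` divides the polynomial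
`g` whose image in `F_q(θ)` is `l_{d−1}·BG_{q^d−2} − l_{d−1}·∑_{i<d} l_i⁻¹`. -/
theorem bernoulliGoss_congruence
    (Fq : Type) [Field Fq] [Fintype Fq] (q : ℕ) (hq : q = Fintype.card Fq) (hq2 : 2 < q)
    (θ : RatFunc Fq) (hθ : θ = RatFunc.X)
    (l : ℕ → RatFunc Fq) (hl0 : l 0 = 1)
    (hl : ∀ i, l (i + 1) = (θ - θ ^ q ^ (i + 1)) * l i)
    (d : ℕ) (P : Polynomial Fq) (hP : P.Monic) (hPirr : Irreducible P)
    (hPdeg : P.natDegree = d)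
    (BG : Polynomial Fq)
    (hBG : BG = ∑ k ∈ Finset.range (d + 1),
      ∑ᶠ a ∈ {a : Polynomial Fq | a.Monic ∧ a.natDegree = k}, a ^ (q ^ d - 2))
    (g : Polynomial Fq)
    (hg : algebraMap (Polynomial Fq) (RatFunc Fq) g =
      l (d - 1) * algebraMap (Polynomial Fq) (RatFunc Fq) BG -
        l (d - 1) * ∑ i ∈ Finset.range d, (l i)⁻¹) :
    P ∣ g := by
  classical
  have hq1 : 1 < q := by omega
  subst hθ
  -- `d ≥ 1`
  have hdpos : 0 < d := by
    rcases Nat.eq_zero_or_pos d with h | h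
    · exfalso
      rw [h] at hPdeg
      exact hPirr.not_isUnit (hP.natDegree_eq_zero.mp hPdeg ▸ isUnit_one)
    · exact h
  have hq3 : 3 ≤ q ^ d := le_trans (by omega) (Nat.le_self_pow (by omega) q)
  -- the polynomials `L i`
  set L : ℕ → Fq[X] := fun i => ∏ j ∈ Finset.range i, (X - X^(q^(j+1))) with hL
  set N : ℕ → Fq[X] := fun i => ∏ j ∈ Finset.Ico i (d-1), (X - X^(q^(j+1))) with hN
  have hfac_ne : ∀ j : ℕ, (X - X^(q^(j+1)) : Fq[X]) ≠ 0 := by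
    intro j h0
    have h1 := congrArg (fun p => Polynomial.coeff p 1) h0
    have hqj : 1 < q^(j+1) := by
      calc 1 < q := hq1
      _ ≤ q^(j+1) := Nat.le_self_pow (by omega) q
    simp only [coeff_sub, coeff_X_one, coeff_X_pow, coeff_zero] at h1
    rw [if_neg (by omega : 1 ≠ q^(j+1))] at h1
    simp at h1
  have hLne : ∀ i, L i ≠ 0 := by
    intro i
    exact Finset.prod_ne_zero_iff.mpr fun j _ => hfac_ne j
  have hlL : ∀ i, l i = algebraMap Fq[X] (RatFunc Fq) (L i) := by
    intro i
    induction i with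
    | zero => rw [hl0, hL]; simp
    | succ i ih =>
      rw [hl i, ih, hL]
      simp only
      rw [Finset.prod_range_succ, map_mul, map_sub, map_pow, RatFunc.algebraMap_X]
      apply mul_comm
  have hlne : ∀ i, l i ≠ 0 := by
    intro i h0
    rw [hlL i] at h0
    exact hLne i ((map_eq_zero_iff _ (RatFunc.algebraMap_injective Fq)).mp h0)
  have hLN : ∀ i ∈ Finset.range d, L i * N i = L (d-1) := by
    intro i hi
    rw [Finset.mem_range] at hi
    rw [hL, hN]
    simp only
    rw [Finset.range_eq_Ico, Finset.prod_Ico_consecutive _ (Nat.zero_le i) (by omega : i ≤ d-1),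
      ← Finset.range_eq_Ico]
  -- polynomial identity for g
  have hgid : g = L (d-1) * BG - ∑ i ∈ Finset.range d, N i := by
    apply RatFunc.algebraMap_injective Fq
    rw [hg, map_sub, map_mul, map_sum]
    rw [hlL (d-1)]
    congr 1
    rw [Finset.mul_sum]
    refine Finset.sum_congr rfl fun i hi => ?_
    rw [hlL i]
    have h2 := congrArg (algebraMap Fq[X] (RatFunc Fq)) (hLN i hi)
    rw [map_mul] at h2
    rw [← h2]
    rw [mul_comm (algebraMap Fq[X] (RatFunc Fq) (L i)), mul_assoc,
      mul_inv_cancel₀ (by rw [← hlL i]; exact hlne i), mul_one]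
  -- the residue field K
  haveI := Fact.mk hPirr
  have hPne : P ≠ 0 := hP.ne_zero
  letI : Fintype (AdjoinRoot P) := Module.fintypeOfFintype (AdjoinRoot.powerBasis hPne).basis
  set t : AdjoinRoot P := AdjoinRoot.root P with ht
  have hcardK : Fintype.card (AdjoinRoot P) = q^d := by
    rw [Module.card_fintype (AdjoinRoot.powerBasis hPne).basis, ← hq,
      Fintype.card_fin, AdjoinRoot.powerBasis_dim, hPdeg]
  -- Frobenius facts
  obtain ⟨n, hp, hcardFq⟩ := FiniteField.card Fq (ringChar Fq)
  haveI : Fact (Nat.Prime (ringChar Fq)) := ⟨hp⟩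
  haveI : CharP (AdjoinRoot P) (ringChar Fq) :=
    charP_of_injective_algebraMap (algebraMap Fq (AdjoinRoot P)).injective (ringChar Fq)
  have hqpn : q = (ringChar Fq)^(n : ℕ) := by rw [hq, hcardFq]
  have hF : ∀ x y : AdjoinRoot P, (x+y)^q = x^q + y^q := by
    intro x y
    rw [hqpn]
    exact add_pow_char_pow x y (ringChar Fq) n
  have hB : ∀ b : Fq, (algebraMap Fq (AdjoinRoot P) b)^q = algebraMap Fq (AdjoinRoot P) b := by
    intro b
    rw [← map_pow]
    congr 1
    rw [hq]
    exact FiniteField.pow_card b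
  have hqcard : Fintype.card Fq = q := hq.symm
  -- image of `ap` polynomials
  have hmk_ap : ∀ (k : ℕ) (c : Fin k → Fq),
      AdjoinRoot.mk P (ap k c) = t^k + vE t c := by
    intro k c
    unfold ap lowPoly vE
    rw [map_add, map_pow, AdjoinRoot.mk_X, map_sum, ← ht]
    have hterm : ∀ i : Fin k, AdjoinRoot.mk P (C (c i) * X^(i:ℕ))
        = algebraMap Fq (AdjoinRoot P) (c i) * t^(i:ℕ) := by
      intro i
      rw [map_mul, AdjoinRoot.mk_C, map_pow, AdjoinRoot.mk_X, ← AdjoinRoot.algebraMap_eq, ← ht]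
    rw [Finset.sum_congr rfl (fun i _ => hterm i)]
  have hmk_ne : ∀ (k : ℕ), k < d → ∀ (c : Fin k → Fq), AdjoinRoot.mk P (ap k c) ≠ 0 := by
    intro k hk c h0
    rw [AdjoinRoot.mk_eq_zero] at h0
    have h1 : P.natDegree ≤ (ap k c).natDegree :=
      natDegree_le_of_dvd h0 (ap_monic k c).ne_zero
    rw [hPdeg, ap_natDegree] at h1
    omega
  have heE : ∀ k : ℕ, eE Fq t k (t^k) = ∏ c : Fin k → Fq, AdjoinRoot.mk P (ap k c) := by
    intro k
    unfold eE
    exact Finset.prod_congr rfl fun c _ => (hmk_ap k c).symm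
  have heE_ne : ∀ k : ℕ, k < d → eE Fq t k (t^k) ≠ 0 := by
    intro k hk
    rw [heE k]
    exact Finset.prod_ne_zero_iff.mpr fun c _ => hmk_ne k hk c
  have hmkL : ∀ i : ℕ, AdjoinRoot.mk P (L i) = ∏ j ∈ Finset.range i, (t - t^(q^(j+1))) := by
    intro i
    rw [hL]
    simp only
    rw [map_prod]
    refine Finset.prod_congr rfl fun j _ => ?_
    rw [map_sub, map_pow, AdjoinRoot.mk_X]
  -- the `L`--`eE` relation and nonvanishing
  have hEL : ∀ k : ℕ, AdjoinRoot.mk P (L k) * DE Fq q t k = eE Fq t k (t^k) := by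
    intro k
    rw [hmkL k]
    exact eE_L Fq q hqcard hF hB t k
  have hmkL_ne : ∀ k : ℕ, k < d → AdjoinRoot.mk P (L k) ≠ 0 := by
    intro k hk h0
    apply heE_ne k hk
    rw [← hEL k, h0, zero_mul]
  have hDE_ne : ∀ k : ℕ, k < d → DE Fq q t k ≠ 0 := by
    intro k hk h0
    apply heE_ne k hk
    rw [← hEL k, h0, mul_zero]
  -- Carlitz identity for each k < d
  have hsum_k : ∀ k : ℕ, k < d →
      ∑ c : Fin k → Fq, (AdjoinRoot.mk P (ap k c))^(q^d - 2)
        = (AdjoinRoot.mk P (L k))⁻¹ := by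
    intro k hk
    have hinv : ∀ c : Fin k → Fq,
        (AdjoinRoot.mk P (ap k c))^(q^d - 2) = (AdjoinRoot.mk P (ap k c))⁻¹ := by
      intro c
      have h1 : (AdjoinRoot.mk P (ap k c))^(q^d - 1) = 1 := by
        rw [← hcardK]
        exact FiniteField.pow_card_sub_one_eq_one _ (hmk_ne k hk c)
      have h2 : q^d - 1 = (q^d - 2) + 1 := by omega
      rw [h2, pow_succ] at h1
      exact eq_inv_of_mul_eq_one_left h1
    rw [Finset.sum_congr rfl (fun c _ => hinv c)]
    have hsE : ∑ c : Fin k → Fq, (AdjoinRoot.mk P (ap k c))⁻¹ = sE Fq t k (t^k) := by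
      unfold sE
      exact Finset.sum_congr rfl fun c _ => by rw [hmk_ap k c]
    rw [hsE]
    have hC := sE_mul Fq q hqcard hF hB t k (t^k) (heE_ne k hk)
    rw [← hEL k] at hC
    have h3 : (sE Fq t k (t^k) * AdjoinRoot.mk P (L k)) * DE Fq q t k = 1 * DE Fq q t k := by
      linear_combination hC
    have h4 := mul_right_cancel₀ (hDE_ne k hk) h3
    exact eq_inv_of_mul_eq_one_left h4
  -- vanishing of the degree-d层 term
  have hsum_d : ∑ c : Fin d → Fq, (AdjoinRoot.mk P (ap d c))^(q^d - 2) = 0 := by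
    have hbij : Function.Bijective (fun c : Fin d → Fq => AdjoinRoot.mk P (ap d c)) := by
      rw [Fintype.bijective_iff_injective_and_card]
      constructor
      · intro c c' hcc
        simp only at hcc
        have hdvd : P ∣ ap d c - ap d c' := by
          rw [← AdjoinRoot.mk_eq_zero, map_sub, hcc, sub_self]
        have hdiff : ap d c - ap d c' = lowPoly c - lowPoly c' := by
          unfold ap; ring
        rw [hdiff] at hdvd
        have hzero : lowPoly c - lowPoly c' = 0 := by
          by_contra hne
          have h5 : P.degree ≤ (lowPoly c - lowPoly c').degree := degree_le_of_dvd hdvd hne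
          have h6 : (lowPoly c - lowPoly c').degree < (d : WithBot ℕ) :=
            lt_of_le_of_lt (degree_sub_le _ _) (max_lt (lowPoly_degree_lt c) (lowPoly_degree_lt c'))
          have hPdeg' : P.degree = (d : WithBot ℕ) := by
            rw [Polynomial.degree_eq_natDegree hPne, hPdeg]
          rw [hPdeg'] at h5
          exact absurd h5 (not_le.mpr h6)
        funext j
        have h7 := congrArg (fun p => Polynomial.coeff p (j:ℕ)) hzero
        simp only [coeff_sub, coeff_zero] at h7
        rw [lowPoly_coeff, lowPoly_coeff] at h7
        exact sub_eq_zero.mp h7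
      · rw [hcardK, Fintype.card_fun, Fintype.card_fin, ← hq]
    have h8 := Fintype.sum_bijective _ hbij
      (fun c : Fin d → Fq => (AdjoinRoot.mk P (ap d c))^(q^d - 2))
      (fun x : AdjoinRoot P => x^(q^d - 2)) (fun c => rfl)
    rw [h8]
    exact FiniteField.sum_pow_lt_card_sub_one _ _ (by rw [hcardK]; omega)
  -- computation of mk BG
  have hmkBG : AdjoinRoot.mk P BG = ∑ i ∈ Finset.range d, (AdjoinRoot.mk P (L i))⁻¹ := by
    rw [hBG, map_sum]
    have h9 : ∀ k ∈ Finset.range (d+1),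
        AdjoinRoot.mk P (∑ᶠ a ∈ {a : Fq[X] | a.Monic ∧ a.natDegree = k}, a ^ (q^d - 2))
          = ∑ c : Fin k → Fq, (AdjoinRoot.mk P (ap k c))^(q^d - 2) := by
      intro k _
      rw [monic_finsum_eq, map_sum]
      exact Finset.sum_congr rfl fun c _ => by rw [map_pow]
    rw [Finset.sum_congr rfl h9, Finset.sum_range_succ, hsum_d, add_zero]
    exact Finset.sum_congr rfl fun k hk => hsum_k k (Finset.mem_range.mp hk)
  -- final assembly
  rw [← AdjoinRoot.mk_eq_zero, hgid, map_sub, map_mul, map_sum, hmkBG, Finset.mul_sum]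
  rw [← Finset.sum_sub_distrib]
  apply Finset.sum_eq_zero
  intro i hi
  have h10 := congrArg (AdjoinRoot.mk P) (hLN i hi)
  rw [map_mul] at h10
  rw [← h10]
  have hine : AdjoinRoot.mk P (L i) ≠ 0 := hmkL_ne i (Finset.mem_range.mp hi)
  rw [mul_comm (AdjoinRoot.mk P (L i)) (AdjoinRoot.mk P (N i)), mul_assoc,
    mul_inv_cancel₀ hine, mul_one, sub_self]
end

section
/- Let q > 2, d ≥ 1, and set α_i = b_i(θ^{q^d})/l_i, β_j = 1/l_j, δ_{i,j} = deg_θ(α_i β_j) for d ≥ i > j ≥ 0. Then δ_{i,j} = i·q^d − Σ_{n=1}^{i} q^n − Σ_{m=1}^{j} q^m, and for pairs (i,j), (i',j') with d ≥ i > j ≥ 0 and d ≥ i' > j' ≥ 0, δ_{i,j} = δ_{i',j'} if and only if (i=i' and j=j'), or (i=d, i'=d−1, j=j'), or (i'=d, i=d−1, j=j'). -/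
set_option autoImplicit false

open Polynomial

section Aux

lemma auxS_succ (q k : ℕ) :
    (∑ m ∈ Finset.Icc 1 (k + 1), (q : ℤ) ^ m)
      = (∑ m ∈ Finset.Icc 1 k, (q : ℤ) ^ m) + (q : ℤ) ^ (k + 1) :=
  Finset.sum_Icc_succ_top (by omega) _

lemma auxS_mono (q : ℕ) (hq : 0 < q) :
    StrictMono (fun k => ∑ m ∈ Finset.Icc 1 k, (q : ℤ) ^ m) := by
  apply strictMono_nat_of_lt_succ
  intro k
  have h : (0 : ℤ) < (q : ℤ) ^ (k + 1) := by
    apply pow_pos; exact_mod_cast hq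
  simp only [auxS_succ]
  linarith

lemma auxS_lt (q : ℕ) (hq : 2 < q) (k : ℕ) :
    (∑ m ∈ Finset.Icc 1 k, (q : ℤ) ^ m) < (q : ℤ) ^ (k + 1) - (q : ℤ) ^ k := by
  have hq3 : (3 : ℤ) ≤ (q : ℤ) := by exact_mod_cast hq
  induction k with
  | zero => simp; linarith
  | succ k ih =>
    rw [auxS_succ]
    have h1 : (q : ℤ) ^ (k + 1 + 1) = q * q ^ (k + 1) := by ring
    have h2 : (q : ℤ) ^ (k + 1) = q * q ^ k := by ring
    have h3 : (0 : ℤ) ≤ (q : ℤ) ^ k := by positivity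
    have h4 : (0 : ℤ) ≤ ((q : ℤ) - 3) * (q : ℤ) ^ (k + 1) :=
      mul_nonneg (by linarith) (by positivity)
    nlinarith

lemma aux_arith (q d : ℕ) (hq2 : 2 < q) (hd : 1 ≤ d) (i j i' j' : ℕ)
    (h1 : j < i) (h2 : i ≤ d) (h3 : j' < i') (h4 : i' ≤ d) :
    ((i : ℤ) * q ^ d - (∑ n ∈ Finset.Icc 1 i, (q : ℤ) ^ n)
        - (∑ m ∈ Finset.Icc 1 j, (q : ℤ) ^ m)
      = (i' : ℤ) * q ^ d - (∑ n ∈ Finset.Icc 1 i', (q : ℤ) ^ n)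
        - (∑ m ∈ Finset.Icc 1 j', (q : ℤ) ^ m))
    ↔ ((i = i' ∧ j = j') ∨ (i = d ∧ i' = d - 1 ∧ j = j')
        ∨ (i' = d ∧ i = d - 1 ∧ j = j')) := by
  have hq1 : (1 : ℤ) ≤ (q : ℤ) := by exact_mod_cast (by omega : 1 ≤ q)
  set S : ℕ → ℤ := fun k => ∑ m ∈ Finset.Icc 1 k, (q : ℤ) ^ m with hS
  set g : ℕ → ℤ := fun k => (k : ℤ) * q ^ d - S k with hg
  have hgstep : ∀ k, g (k + 1) = g k + ((q : ℤ) ^ d - (q : ℤ) ^ (k + 1)) := by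
    intro k
    simp only [hg, hS, auxS_succ]
    push_cast
    ring
  have hgd : g d = g (d - 1) := by
    have h := hgstep (d - 1)
    rw [Nat.sub_add_cancel hd] at h
    simp [h]
  have hgap : ∀ a b, a < b → b ≤ d - 1 →
      g a + ((q : ℤ) ^ d - (q : ℤ) ^ (d - 1)) ≤ g b := by
    intro a b hab hbd
    induction b with
    | zero => omega
    | succ b ih =>
      rcases Nat.lt_succ_iff_lt_or_eq.mp hab with h | h
      · have hb : b ≤ d - 1 := by omega
        have hih := ih h hb
        have hstep := hgstep b
        have hle : ((q : ℤ)) ^ (b + 1) ≤ (q : ℤ) ^ d :=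
          pow_le_pow_right₀ hq1 (by omega)
        linarith
      · subst h
        rw [hgstep]
        have hle : ((q : ℤ)) ^ (a + 1) ≤ (q : ℤ) ^ (d - 1) :=
          pow_le_pow_right₀ hq1 (by omega)
        linarith
  have hgval : ∀ k, k ≤ d → g k = g (min k (d - 1)) := by
    intro k hk
    rcases le_or_gt k (d - 1) with h | h
    · rw [min_eq_left h]
    · have hkd : k = d := by omega
      have : min k (d - 1) = d - 1 := by omega
      rw [this, hkd, hgd]
  have hSmono := auxS_mono q (by omega)
  have hS0 : ∀ k, 0 ≤ S k := by
    intro k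
    apply Finset.sum_nonneg
    intro m _
    positivity
  have hSle : ∀ k, k ≤ d - 1 → S k ≤ S (d - 1) := fun k hk => hSmono.monotone hk
  have hSd : S (d - 1) < (q : ℤ) ^ d - (q : ℤ) ^ (d - 1) := by
    have h := auxS_lt q hq2 (d - 1)
    rwa [Nat.sub_add_cancel hd] at h
  have hjd : j ≤ d - 1 := by omega
  have hj'd : j' ≤ d - 1 := by omega
  constructor
  · intro h
    have hF : g i - S j = g i' - S j' := by
      simp only [hg, hS]
      linarith [h]
    rw [hgval i h2, hgval i' h4] at hF
    have hmm : min i (d - 1) = min i' (d - 1) := by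
      rcases lt_trichotomy (min i (d - 1)) (min i' (d - 1)) with hlt | heq | hgt
      · exfalso
        have := hgap _ _ hlt (min_le_right _ _)
        have hb1 := hSle j' hj'd
        have hb2 := hS0 j
        linarith
      · exact heq
      · exfalso
        have := hgap _ _ hgt (min_le_right _ _)
        have hb1 := hSle j hjd
        have hb2 := hS0 j'
        linarith
    rw [hmm] at hF
    have hjj : j = j' := hSmono.injective (by linarith : S j = S j')
    rcases le_or_gt i (d - 1) with hi | hi <;> rcases le_or_gt i' (d - 1) with hi' | hi'
    · left; exact ⟨by omega, hjj⟩
    · right; right; exact ⟨by omega, by omega, hjj.symm ▸ hjj⟩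
    · right; left; exact ⟨by omega, by omega, hjj⟩
    · left; exact ⟨by omega, hjj⟩
  · intro h
    have hgdS : g d = g (d - 1) := hgd
    simp only [hg, hS] at hgdS
    rcases h with ⟨rfl, rfl⟩ | ⟨hi, hi', rfl⟩ | ⟨hi', hi, rfl⟩
    · rfl
    · subst hi; subst hi'; linarith
    · subst hi'; subst hi; linarith

end Aux

/-- For `q > 2`, `d ≥ 1`, with `α_i = b_i(θ^{q^d})/l_i`, `β_j = 1/l_j`:
`δ_{i,j} := deg_θ(α_i β_j) = i q^d − ∑_{n=1}^i qⁿ − ∑_{m=1}^j qᵐ` for `d ≥ i > j ≥ 0`,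
and `δ_{i,j} = δ_{i',j'}` iff `(i,j)=(i',j')`, or `i=d, i'=d−1, j=j'`, or
`i'=d, i=d−1, j=j'`. -/
theorem degrees_alpha_beta
    (Fq : Type) [Field Fq] [Fintype Fq] (q : ℕ) (hq : q = Fintype.card Fq) (hq2 : 2 < q)
    (θ : RatFunc Fq) (hθ : θ = RatFunc.X)
    (l : ℕ → RatFunc Fq) (hl0 : l 0 = 1)
    (hl : ∀ i, l (i + 1) = (θ - θ ^ q ^ (i + 1)) * l i)
    (d : ℕ) (hd : 1 ≤ d)
    (α β : ℕ → RatFunc Fq)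
    (hα : ∀ i, α i = (∏ n ∈ Finset.range i, (θ ^ q ^ d - θ ^ q ^ n)) / l i)
    (hβ : ∀ j, β j = (l j)⁻¹) :
    (∀ i j, j < i → i ≤ d →
      (α i * β j).intDegree =
        (i : ℤ) * q ^ d - ∑ n ∈ Finset.Icc 1 i, (q : ℤ) ^ n
          - ∑ m ∈ Finset.Icc 1 j, (q : ℤ) ^ m) ∧
    (∀ i j i' j', j < i → i ≤ d → j' < i' → i' ≤ d →
      ((α i * β j).intDegree = (α i' * β j').intDegree ↔
        (i = i' ∧ j = j') ∨ (i = d ∧ i' = d - 1 ∧ j = j') ∨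
          (i' = d ∧ i = d - 1 ∧ j = j'))) := by
  have hq1 : 1 < q := by omega
  -- degree of θ^a - θ^b for b < a
  have hfact : ∀ a b : ℕ, b < a →
      (θ ^ a - θ ^ b ≠ 0 ∧ (θ ^ a - θ ^ b).intDegree = a) := by
    intro a b hab
    have hdeg : ((X : Fq[X]) ^ a - X ^ b).natDegree = a := by
      rw [Polynomial.natDegree_sub_eq_left_of_natDegree_lt
        (by simpa [Polynomial.natDegree_X_pow] using hab)]
      exact Polynomial.natDegree_X_pow a
    have hne : (X : Fq[X]) ^ a - X ^ b ≠ 0 := by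
      intro hzero
      rw [hzero, Polynomial.natDegree_zero] at hdeg
      omega
    have heq : θ ^ a - θ ^ b
        = algebraMap Fq[X] (RatFunc Fq) ((X : Fq[X]) ^ a - X ^ b) := by
      rw [map_sub, map_pow, map_pow, RatFunc.algebraMap_X, hθ]
    refine ⟨?_, ?_⟩
    · rw [heq]; exact RatFunc.algebraMap_ne_zero hne
    · rw [heq, RatFunc.intDegree_polynomial, hdeg]
  -- l facts
  have hlfact : ∀ i, l i ≠ 0 ∧ (l i).intDegree = ∑ n ∈ Finset.Icc 1 i, (q : ℤ) ^ n := by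
    intro i
    induction i with
    | zero => simp [hl0, RatFunc.intDegree_one]
    | succ i ih =>
      have hpow : 1 < q ^ (i + 1) := Nat.one_lt_pow (by omega) hq1
      have hf := hfact (q ^ (i + 1)) 1 hpow
      have hswap : θ - θ ^ q ^ (i + 1) = -(θ ^ q ^ (i + 1) - θ ^ 1) := by
        rw [pow_one]; ring
      have hfne : θ - θ ^ q ^ (i + 1) ≠ 0 := by
        rw [hswap, neg_ne_zero]; exact hf.1
      have hfdeg : (θ - θ ^ q ^ (i + 1)).intDegree = (q ^ (i + 1) : ℕ) := by
        rw [hswap, RatFunc.intDegree_neg, hf.2]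
      constructor
      · rw [hl i]; exact mul_ne_zero hfne ih.1
      · rw [hl i, RatFunc.intDegree_mul hfne ih.1, hfdeg, ih.2,
          Finset.sum_Icc_succ_top (by omega : 1 ≤ i + 1)]
        push_cast
        ring
  -- product facts
  have hprod : ∀ i, i ≤ d →
      ((∏ n ∈ Finset.range i, (θ ^ q ^ d - θ ^ q ^ n)) ≠ 0 ∧
        (∏ n ∈ Finset.range i, (θ ^ q ^ d - θ ^ q ^ n)).intDegree = (i : ℤ) * q ^ d) := by
    intro i hi
    induction i with
    | zero => simp [RatFunc.intDegree_one]
    | succ i ih =>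
      have hi' : i ≤ d := by omega
      have hih := ih hi'
      have hpw : q ^ i < q ^ d := Nat.pow_lt_pow_right hq1 (by omega)
      have hf := hfact (q ^ d) (q ^ i) hpw
      constructor
      · rw [Finset.prod_range_succ]; exact mul_ne_zero hih.1 hf.1
      · rw [Finset.prod_range_succ, RatFunc.intDegree_mul hih.1 hf.1, hih.2, hf.2]
        push_cast
        ring
  -- intDegree of inverse
  have hinv : ∀ x : RatFunc Fq, x ≠ 0 → x⁻¹.intDegree = -x.intDegree := by
    intro x hx
    have h := RatFunc.intDegree_mul hx (inv_ne_zero hx)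
    rw [mul_inv_cancel₀ hx, RatFunc.intDegree_one] at h
    linarith
  -- the key degree formula
  have hkey : ∀ i j, j < i → i ≤ d →
      (α i * β j).intDegree =
        (i : ℤ) * q ^ d - (∑ n ∈ Finset.Icc 1 i, (q : ℤ) ^ n)
          - (∑ m ∈ Finset.Icc 1 j, (q : ℤ) ^ m) := by
    intro i j hji hid
    have hp := hprod i hid
    have hli := hlfact i
    have hlj := hlfact j
    rw [hα i, hβ j, div_eq_mul_inv,
      RatFunc.intDegree_mul (mul_ne_zero hp.1 (inv_ne_zero hli.1)) (inv_ne_zero hlj.1),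
      RatFunc.intDegree_mul hp.1 (inv_ne_zero hli.1),
      hinv _ hli.1, hinv _ hlj.1, hp.2, hli.2, hlj.2]
    ring
  refine ⟨hkey, ?_⟩
  intro i j i' j' h1 h2 h3 h4
  rw [hkey i j h1 h2, hkey i' j' h3 h4]
  exact aux_arith q d hq2 hd i j i' j' h1 h2 h3 h4
end

section
/- For all n ≥ 1 and d ≥ 0, τ^n(b_d(t)) = l_d^{q^{n−1}} · Σ_{d ≥ i_1 ≥ i_2 ≥ ··· ≥ i_n ≥ 0} l_{i_1}^{q^{n−2}−q^{n−1}} l_{i_2}^{q^{n−3}−q^{n−2}} ··· l_{i_{n−1}}^{1−q} l_{i_n}^{−1} b_{i_n}(t) in F_q(θ)[t], where τ^n replaces θ by θ^{q^n}. -/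
set_option autoImplicit false
set_option maxHeartbeats 1000000

open Polynomial

namespace IterTwistAux

def consFn (j : ℕ) (i : ℕ → ℕ) : ℕ → ℕ
  | 0 => j
  | k + 1 => i k

def chainSet (n d : ℕ) : Set (ℕ → ℕ) :=
  {i : ℕ → ℕ | i 0 ≤ d ∧ (∀ k, k + 1 < n → i (k + 1) ≤ i k) ∧ (∀ k, n ≤ k → i k = 0)}

theorem chainSet_finite (n d : ℕ) : (chainSet n d).Finite := by
  apply Set.Finite.subset (Set.finite_range
    (fun g : Fin n → Fin (d + 1) => fun k => if h : k < n then (g ⟨k, h⟩ : ℕ) else 0))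
  rintro i ⟨h0, hdec, hz⟩
  have hbd : ∀ k, i k ≤ d := by
    intro k
    induction k with
    | zero => exact h0
    | succ k ih =>
      by_cases h : k + 1 < n
      · exact le_trans (hdec k h) ih
      · rw [hz _ (by omega)]; omega
  refine ⟨fun m => ⟨i m.1, Nat.lt_succ_of_le (hbd m.1)⟩, ?_⟩
  funext k
  by_cases h : k < n
  · simp [h]
  · simp only [dif_neg h]
    exact (hz k (le_of_not_gt h)).symm

theorem chainSet_one (d : ℕ) :
    chainSet 1 d = (fun j : ℕ => consFn j (fun _ => 0)) '' ↑(Finset.range (d + 1)) := by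
  ext i
  constructor
  · rintro ⟨h0, _, hz⟩
    refine ⟨i 0, by simpa using Nat.lt_succ_of_le h0, ?_⟩
    funext k
    cases k with
    | zero => rfl
    | succ k => exact (hz (k + 1) (by omega)).symm
  · rintro ⟨j, hj, rfl⟩
    refine ⟨show j ≤ d from Nat.lt_succ_iff.mp (by simpa using hj), fun k hk => by omega, fun k hk => ?_⟩
    cases k with
    | zero => omega
    | succ k => rfl

theorem consFn_injective (j : ℕ) : Function.Injective (consFn j) := by
  intro i1 i2 h
  funext k
  exact congrFun h (k + 1)

theorem chainSet_succ (m d : ℕ) :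
    chainSet (m + 2) d = ⋃ j ∈ (↑(Finset.range (d + 1)) : Set ℕ), consFn j '' chainSet (m + 1) j := by
  ext i
  simp only [Set.mem_iUnion, Finset.coe_range, Set.mem_Iio, Set.mem_image, exists_prop]
  constructor
  · rintro ⟨h0, hdec, hz⟩
    refine ⟨i 0, Nat.lt_succ_of_le h0, fun k => i (k + 1), ⟨hdec 0 (by omega), fun k hk => hdec (k + 1) (by omega), fun k hk => hz (k + 1) (by omega)⟩, ?_⟩
    funext k
    cases k with
    | zero => rfl
    | succ k => rfl
  · rintro ⟨j, hj, i', ⟨h0, hdec, hz⟩, rfl⟩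
    refine ⟨Nat.lt_succ_iff.mp hj, fun k hk => ?_, fun k hk => ?_⟩
    · cases k with
      | zero => exact h0
      | succ k => exact hdec k (by omega)
    · cases k with
      | zero => omega
      | succ k => exact hz k (by omega)

theorem chainSet_disjoint (m d : ℕ) :
    (↑(Finset.range (d + 1)) : Set ℕ).PairwiseDisjoint
      (fun j => consFn j '' chainSet (m + 1) j) := by
  intro j _ j' _ hne
  rw [Function.onFun, Set.disjoint_left]
  rintro x ⟨i1, _, rfl⟩ ⟨i2, _, hx⟩
  exact hne (congrFun hx 0).symm

variable {K : Type} [Field K]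

noncomputable def Gaux (q : ℕ) (l : ℕ → K) (b : ℕ → Polynomial K) : ℕ → ℕ → Polynomial K
  | 0, d => C (l d) * ∑ i ∈ Finset.range (d + 1), C (l i)⁻¹ * b i
  | m + 1, d => C (l d ^ q ^ (m + 1)) *
      ∑ j ∈ Finset.range (d + 1), C ((l j ^ q ^ (m + 1))⁻¹) * Gaux q l b m j

noncomputable def chainTerm (q : ℕ) (l : ℕ → K) (b : ℕ → Polynomial K) (n : ℕ) (i : ℕ → ℕ) :
    Polynomial K :=
  C ((∏ k ∈ Finset.range (n - 1),
        (l (i k)) ^ ((q : ℤ) ^ (n - 2 - k) - (q : ℤ) ^ (n - 1 - k))) *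
      (l (i (n - 1)))⁻¹) * b (i (n - 1))

theorem finsum_mem_mul_left {α : Type} (s : Set α) (hs : s.Finite) (c : Polynomial K)
    (f : α → Polynomial K) : ∑ᶠ i ∈ s, c * f i = c * ∑ᶠ i ∈ s, f i := by
  rw [finsum_mem_eq_finite_toFinset_sum _ hs, finsum_mem_eq_finite_toFinset_sum _ hs,
    Finset.mul_sum]

end IterTwistAux
/-- For all `n ≥ 1`, `d ≥ 0`:
`τⁿ(b_d(t)) = l_d^{q^{n−1}} ∑_{d ≥ i₁ ≥ ⋯ ≥ iₙ ≥ 0}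
  l_{i₁}^{q^{n−2}−q^{n−1}} ⋯ l_{i_{n−1}}^{1−q} l_{iₙ}^{−1} b_{iₙ}(t)` in `F_q(θ)[t]`,
where `τⁿ` replaces `θ` by `θ^{qⁿ}`. Chains are encoded as functions `i : ℕ → ℕ`
with `i 0 ≤ d`, decreasing on `{0,…,n−1}` (`i k ↔ i_{k+1}` of the paper), and
vanishing from index `n` on. -/
theorem iterated_twist_b
    (Fq : Type) [Field Fq] [Fintype Fq] (q : ℕ) (hq : q = Fintype.card Fq)
    (θ : RatFunc Fq) (hθ : θ = RatFunc.X)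
    (l : ℕ → RatFunc Fq) (hl0 : l 0 = 1)
    (hl : ∀ i, l (i + 1) = (θ - θ ^ q ^ (i + 1)) * l i)
    (b : ℕ → Polynomial (RatFunc Fq)) (hb0 : b 0 = 1)
    (hb : ∀ i, b (i + 1) = b i * (X - C (θ ^ q ^ i)))
    (n : ℕ) (hn : 1 ≤ n) (d : ℕ) :
    (∏ m ∈ Finset.range d, (X - C (θ ^ q ^ (n + m)))) =
      C ((l d) ^ q ^ (n - 1)) *
        ∑ᶠ i ∈ {i : ℕ → ℕ | i 0 ≤ d ∧ (∀ k, k + 1 < n → i (k + 1) ≤ i k) ∧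
            (∀ k, n ≤ k → i k = 0)},
          C ((∏ k ∈ Finset.range (n - 1),
                (l (i k)) ^ ((q : ℤ) ^ (n - 2 - k) - (q : ℤ) ^ (n - 1 - k))) *
              (l (i (n - 1)))⁻¹) *
            b (i (n - 1)) := by
  have hq2 : 2 ≤ q := by rw [hq]; exact Fintype.one_lt_card
  have hθne : ∀ m : ℕ, 1 ≤ m → θ - θ ^ q ^ m ≠ 0 := by
    intro m hm
    rw [sub_ne_zero, hθ]
    intro h
    have h' : (Polynomial.X : Polynomial Fq) = Polynomial.X ^ q ^ m := by
      apply RatFunc.algebraMap_injective Fq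
      simpa [map_pow, RatFunc.algebraMap_X] using h
    have h2 := congrArg natDegree h'
    rw [natDegree_X, natDegree_X_pow] at h2
    have : q ≤ q ^ m := Nat.le_self_pow (by omega) q
    omega
  have hlne : ∀ i, l i ≠ 0 := by
    intro i
    induction i with
    | zero => rw [hl0]; exact one_ne_zero
    | succ i ih => rw [hl]; exact mul_ne_zero (hθne _ (by omega)) ih
  have hbprod : ∀ i, b i = ∏ m ∈ Finset.range i, (X - C (θ ^ q ^ m)) := by
    intro i
    induction i with
    | zero => simpa using hb0
    | succ i ih => rw [hb, ih, Finset.prod_range_succ]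
  -- Frobenius
  haveI : CharP (RatFunc Fq) (ringChar Fq) :=
    charP_of_injective_algebraMap' Fq (A := RatFunc Fq) (ringChar Fq)
  obtain ⟨k, hp, hcard⟩ := FiniteField.card Fq (ringChar Fq)
  haveI : Fact (ringChar Fq).Prime := ⟨hp⟩
  haveI : ExpChar (RatFunc Fq) (ringChar Fq) := .prime hp
  set φ := iterateFrobenius (RatFunc Fq) (ringChar Fq) k with hφdef
  have hφ : ∀ x : RatFunc Fq, φ x = x ^ q := by
    intro x
    rw [hφdef, iterateFrobenius_def, ← hcard, ← hq]
  have hG0 : ∀ e, IterTwistAux.Gaux q l b 0 e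
      = C (l e) * ∑ i ∈ Finset.range (e + 1), C (l i)⁻¹ * b i := fun e => rfl
  have hGsucc : ∀ m e, IterTwistAux.Gaux q l b (m + 1) e
      = C (l e ^ q ^ (m + 1)) * ∑ j ∈ Finset.range (e + 1),
          C ((l j ^ q ^ (m + 1))⁻¹) * IterTwistAux.Gaux q l b m j := fun m e => rfl
  have A : ∀ e, (X - C θ) * (C (l e) * ∑ i ∈ Finset.range (e + 1), C (l i)⁻¹ * b i)
      = b (e + 1) := by
    intro e
    induction e with
    | zero =>
      rw [hb 0]
      simp [hl0, hb0]
    | succ e ih =>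
      have hC : C (l (e + 1)) * C (l (e + 1))⁻¹ = (1 : Polynomial (RatFunc Fq)) := by
        rw [← C_mul, mul_inv_cancel₀ (hlne (e + 1)), map_one]
      calc (X - C θ) * (C (l (e + 1)) * ∑ i ∈ Finset.range (e + 2), C (l i)⁻¹ * b i)
          = C (θ - θ ^ q ^ (e + 1)) *
              ((X - C θ) * (C (l e) * ∑ i ∈ Finset.range (e + 1), C (l i)⁻¹ * b i))
            + (C (l (e + 1)) * C (l (e + 1))⁻¹) * ((X - C θ) * b (e + 1)) := by
            rw [Finset.sum_range_succ (n := e + 1), hl e, C_mul]; ring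
        _ = C (θ - θ ^ q ^ (e + 1)) * b (e + 1) + (X - C θ) * b (e + 1) := by
            rw [ih, hC, one_mul]
        _ = b (e + 1) * (X - C (θ ^ q ^ (e + 1))) := by rw [map_sub]; ring
        _ = b (e + 2) := (hb (e + 1)).symm
  have B : ∀ e, (∏ m ∈ Finset.range e, (X - C (θ ^ q ^ (m + 1))))
      = C (l e) * ∑ i ∈ Finset.range (e + 1), C (l i)⁻¹ * b i := by
    intro e
    induction e with
    | zero => simp [hl0, hb0]
    | succ e ih =>
      have hC : C (l (e + 1)) * C (l (e + 1))⁻¹ = (1 : Polynomial (RatFunc Fq)) := by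
        rw [← C_mul, mul_inv_cancel₀ (hlne (e + 1)), map_one]
      calc (∏ m ∈ Finset.range (e + 1), (X - C (θ ^ q ^ (m + 1))))
          = (C (l e) * ∑ i ∈ Finset.range (e + 1), C (l i)⁻¹ * b i)
              * ((X - C θ) + C (θ - θ ^ q ^ (e + 1))) := by
            rw [Finset.prod_range_succ, ih, map_sub]; ring
        _ = b (e + 1) + C (θ - θ ^ q ^ (e + 1)) *
              (C (l e) * ∑ i ∈ Finset.range (e + 1), C (l i)⁻¹ * b i) := by
            rw [mul_add, mul_comm _ (X - C θ), A e]; ring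
        _ = C (l (e + 1)) * ∑ i ∈ Finset.range (e + 2), C (l i)⁻¹ * b i := by
            rw [Finset.sum_range_succ (n := e + 1), mul_add,
              ← mul_assoc (C (l (e + 1))) (C (l (e + 1))⁻¹) (b (e + 1)), hC, one_mul,
              hl e, C_mul]
            ring
  have hmapfac : ∀ s : ℕ, Polynomial.map φ (X - C (θ ^ q ^ s)) = X - C (θ ^ q ^ (s + 1)) := by
    intro s
    rw [Polynomial.map_sub, Polynomial.map_X, Polynomial.map_C, hφ, ← pow_mul, ← pow_succ]
  have hmapb : ∀ i, Polynomial.map φ (b i) = C (l i) * ∑ j ∈ Finset.range (i + 1), C (l j)⁻¹ * b j := by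
    intro i
    rw [hbprod i, Polynomial.map_prod, ← B i]
    exact Finset.prod_congr rfl fun s _ => hmapfac s
  have M : ∀ m e, Polynomial.map φ (IterTwistAux.Gaux q l b m e)
      = IterTwistAux.Gaux q l b (m + 1) e := by
    intro m
    induction m with
    | zero =>
      intro e
      rw [hG0, hGsucc, Polynomial.map_mul, Polynomial.map_C, Polynomial.map_sum, hφ, pow_one]
      congr 1
      apply Finset.sum_congr rfl
      intro i _
      rw [Polynomial.map_mul, Polynomial.map_C, hφ, inv_pow, hmapb i, hG0]
    | succ m ih =>
      intro e
      rw [hGsucc, hGsucc, Polynomial.map_mul, Polynomial.map_C, Polynomial.map_sum, hφ,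
        ← pow_mul, ← pow_succ]
      congr 1
      apply Finset.sum_congr rfl
      intro j _
      rw [Polynomial.map_mul, Polynomial.map_C, hφ, inv_pow, ← pow_mul, ← pow_succ, ih j]
  have Cc : ∀ m e, (∏ k ∈ Finset.range e, (X - C (θ ^ q ^ (m + 1 + k))))
      = IterTwistAux.Gaux q l b m e := by
    intro m
    induction m with
    | zero =>
      intro e
      rw [hG0, ← B e]
      exact Finset.prod_congr rfl fun k _ => by rw [show 0 + 1 + k = k + 1 by omega]
    | succ m ih =>
      intro e
      rw [← M m e, ← ih e, Polynomial.map_prod]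
      refine (Finset.prod_congr rfl fun k _ => ?_).symm
      rw [hmapfac, show m + 1 + k + 1 = m + 2 + k by omega]
  have P : ∀ m e, C (l e ^ q ^ m) *
      (∑ᶠ i ∈ IterTwistAux.chainSet (m + 1) e, IterTwistAux.chainTerm q l b (m + 1) i)
      = IterTwistAux.Gaux q l b m e := by
    intro m
    induction m with
    | zero =>
      intro e
      have hinj : Set.InjOn (fun j : ℕ => IterTwistAux.consFn j (fun _ => 0))
          ↑(Finset.range (e + 1)) := fun a _ a' _ h => congrFun h 0
      rw [IterTwistAux.chainSet_one, finsum_mem_image hinj, finsum_mem_coe_finset,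
        pow_zero, pow_one, hG0]
      congr 1
      apply Finset.sum_congr rfl
      intro j _
      simp [IterTwistAux.chainTerm, IterTwistAux.consFn]
    | succ m ih =>
      intro e
      rw [hGsucc, IterTwistAux.chainSet_succ,
        finsum_mem_biUnion (IterTwistAux.chainSet_disjoint m e) (Finset.finite_toSet _)
          (fun j _ => (IterTwistAux.chainSet_finite _ _).image _),
        finsum_mem_coe_finset]
      congr 1
      apply Finset.sum_congr rfl
      intro j _
      have hinj : Set.InjOn (IterTwistAux.consFn j) (IterTwistAux.chainSet (m + 1) j) :=
        Set.injOn_of_injective (IterTwistAux.consFn_injective j)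
      have hkey : ∀ i1 : ℕ → ℕ,
          IterTwistAux.chainTerm q l b (m + 2) (IterTwistAux.consFn j i1)
          = C (l j ^ ((q : ℤ) ^ m - (q : ℤ) ^ (m + 1)))
              * IterTwistAux.chainTerm q l b (m + 1) i1 := by
        intro i1
        show C ((∏ k ∈ Finset.range (m + 1),
              l (IterTwistAux.consFn j i1 k) ^ ((q : ℤ) ^ (m - k) - (q : ℤ) ^ (m + 1 - k))) *
            (l (i1 m))⁻¹) * b (i1 m)
          = C (l j ^ ((q : ℤ) ^ m - (q : ℤ) ^ (m + 1))) *
            (C ((∏ k ∈ Finset.range m,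
                l (i1 k) ^ ((q : ℤ) ^ (m - 1 - k) - (q : ℤ) ^ (m - k))) *
              (l (i1 m))⁻¹) * b (i1 m))
        rw [Finset.prod_range_succ']
        have hpe : (∏ k ∈ Finset.range m,
            l (IterTwistAux.consFn j i1 (k + 1)) ^
              ((q : ℤ) ^ (m - (k + 1)) - (q : ℤ) ^ (m + 1 - (k + 1))))
            = ∏ k ∈ Finset.range m,
                l (i1 k) ^ ((q : ℤ) ^ (m - 1 - k) - (q : ℤ) ^ (m - k)) := by
          apply Finset.prod_congr rfl
          intro k _
          rw [show m + 1 - (k + 1) = m - k by omega, show m - (k + 1) = m - 1 - k by omega]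
          rfl
        rw [hpe]
        simp only [IterTwistAux.consFn, Nat.sub_zero]
        simp only [map_mul]
        ring
      have hz : l j ^ ((q : ℤ) ^ m - (q : ℤ) ^ (m + 1)) = (l j ^ q ^ (m + 1))⁻¹ * l j ^ q ^ m := by
        rw [zpow_sub₀ (hlne j), show ((q : ℤ) ^ m) = ((q ^ m : ℕ) : ℤ) by push_cast; ring,
          show ((q : ℤ) ^ (m + 1)) = ((q ^ (m + 1) : ℕ) : ℤ) by push_cast; ring,
          zpow_natCast, zpow_natCast, div_eq_mul_inv, mul_comm]
      rw [finsum_mem_image hinj, finsum_mem_congr rfl (fun i1 _ => hkey i1),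
        IterTwistAux.finsum_mem_mul_left _ (IterTwistAux.chainSet_finite _ _),
        ← ih j, hz, map_mul, mul_assoc]
  obtain ⟨m, rfl⟩ : ∃ m, n = m + 1 := ⟨n - 1, by omega⟩
  have goal' : (∏ mm ∈ Finset.range d, (X - C (θ ^ q ^ (m + 1 + mm))))
      = C (l d ^ q ^ m) * ∑ᶠ i ∈ IterTwistAux.chainSet (m + 1) d,
          IterTwistAux.chainTerm q l b (m + 1) i := by
    rw [P m d]; exact Cc m d
  exact goal'
end
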